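/- arXiv:2301.12427 — 4 statements merged into one kernel-verified Lean document; each statement's English description precedes it below -/
import Mathlib

section
/- For every natural number d, C(d,4) = (12/(4·3))·L_d(2) − (6/(4·2!))·L_d(3) + (1/3!)·L_d(4) as rational numbers, where L_d(w) = (1/w)·Σ_{r ∣ w} μ(r)·d^{w/r} is the Witt number. -/
/-- The Witt number `L_d(w) = (1/w) * Σ_{r ∣ w} μ(r) * d^(w/r)`, as a rational number. -/
def witt (d w : ℕ) : ℚ :=
  (1 / w : ℚ) * ∑ r ∈ w.divisors, (ArithmeticFunction.moebius r : ℚ) * (d : ℚ) ^ (w / r)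

lemma moe1 : (ArithmeticFunction.moebius 1 : ℤ) = 1 := by simp
lemma moe2 : (ArithmeticFunction.moebius 2 : ℤ) = -1 :=
  ArithmeticFunction.moebius_apply_prime Nat.prime_two
lemma moe3 : (ArithmeticFunction.moebius 3 : ℤ) = -1 :=
  ArithmeticFunction.moebius_apply_prime Nat.prime_three
lemma moe4 : (ArithmeticFunction.moebius 4 : ℤ) = 0 :=
  ArithmeticFunction.moebius_eq_zero_of_not_squarefree (by decide)

lemma div2 : (2:ℕ).divisors = {1,2} := by decide
lemma div3 : (3:ℕ).divisors = {1,3} := by decide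
lemma div4 : (4:ℕ).divisors = {1,2,4} := by decide

lemma c2aux (d : ℕ) : (d.choose 2 : ℚ) = ((d:ℚ)^2 - d)/2 := by
  induction d with
  | zero => norm_num
  | succ n ih =>
    rw [Nat.choose_succ_succ]
    push_cast [ih, Nat.choose_one_right]
    ring

lemma c3aux (d : ℕ) : (d.choose 3 : ℚ) = ((d:ℚ)^3 - 3*d^2 + 2*d)/6 := by
  induction d with
  | zero => norm_num
  | succ n ih =>
    rw [Nat.choose_succ_succ]
    push_cast [ih, c2aux]
    ring

lemma c4aux (d : ℕ) : (d.choose 4 : ℚ) = ((d:ℚ)^4 - 6*d^3 + 11*d^2 - 6*d)/24 := by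
  induction d with
  | zero => norm_num
  | succ n ih =>
    rw [Nat.choose_succ_succ]
    push_cast [ih, c3aux]
    ring

/-- C(d,4) = (12/(4·3))·L_d(2) − (6/(4·2!))·L_d(3) + (1/3!)·L_d(4). -/
theorem choose_four_eq (d : ℕ) :
    (d.choose 4 : ℚ) =
      (12 / (4 * 3)) * witt d 2 - (6 / (4 * 2)) * witt d 3 + (1 / 6) * witt d 4 := by
  rw [c4aux]
  simp only [witt, div2, div3, div4]
  rw [Finset.sum_insert (by decide), Finset.sum_insert (by decide),
    Finset.sum_insert (by decide), Finset.sum_insert (by decide), Finset.sum_singleton, Finset.sum_singleton,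
    Finset.sum_singleton]
  rw [moe1, moe2, moe3, moe4]
  norm_num
  ring
end

section
/- For every natural number d, C(d,5) = −(60/(5·4·3))·L_d(2) + (35/(5·4·2!))·L_d(3) − (10/(5·3!))·L_d(4) + (1/4!)·L_d(5) as rational numbers, where L_d(w) = (1/w)·Σ_{r ∣ w} μ(r)·d^{w/r} is the Witt number. -/
open ArithmeticFunction in
lemma witt_vals (d : ℕ) :
    witt d 2 = ((d:ℚ)^2 - d)/2 ∧ witt d 3 = ((d:ℚ)^3 - d)/3 ∧
    witt d 4 = ((d:ℚ)^4 - (d:ℚ)^2)/4 ∧ witt d 5 = ((d:ℚ)^5 - d)/5 := by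
  have h2 : (2:ℕ).divisors = {1,2} := by decide
  have h3 : (3:ℕ).divisors = {1,3} := by decide
  have h4 : (4:ℕ).divisors = {1,2,4} := by decide
  have h5 : (5:ℕ).divisors = {1,5} := by decide
  have m2 : moebius 2 = -1 := moebius_apply_prime (by norm_num)
  have m3 : moebius 3 = -1 := moebius_apply_prime (by norm_num)
  have m5 : moebius 5 = -1 := moebius_apply_prime (by norm_num)
  have m4 : moebius 4 = 0 := by
    rw [moebius_eq_zero_of_not_squarefree]; decide
  refine ⟨?_, ?_, ?_, ?_⟩ <;>
    simp [witt, h2, h3, h4, h5, m2, m3, m4, m5, Finset.sum_insert, Finset.sum_singleton] <;> ring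

lemma choose_cast (d : ℕ) :
    (d.choose 5 : ℚ) = (d:ℚ)*((d:ℚ)-1)*((d:ℚ)-2)*((d:ℚ)-3)*((d:ℚ)-4)/120 := by
  rcases Nat.lt_or_ge d 5 with h | h
  · interval_cases d <;> simp [Nat.choose_eq_zero_of_lt] <;> norm_num
  · obtain ⟨m, rfl⟩ := Nat.exists_eq_add_of_le h
    have := Nat.descFactorial_eq_factorial_mul_choose (5 + m) 5
    have h2 : (5 + m).descFactorial 5 = (5+m)*(4+m)*(3+m)*(2+m)*(1+m) := by
      simp only [Nat.descFactorial_succ, Nat.descFactorial_zero,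
        show 5+m-1=4+m by omega, show 5+m-2=3+m by omega, show 5+m-3=2+m by omega,
        show 5+m-4=1+m by omega, show 5+m-0=5+m by omega]; ring
    have h3 : (120 : ℚ) * ((5+m).choose 5 : ℚ) = ((5+m)*(4+m)*(3+m)*(2+m)*(1+m) : ℕ) := by
      rw [← h2, this]; push_cast [Nat.factorial]; ring
    push_cast at h3 ⊢
    field_simp
    linarith [h3]

/-- C(d,5) = −(60/(5·4·3))·L_d(2) + (35/(5·4·2!))·L_d(3) − (10/(5·3!))·L_d(4) + (1/4!)·L_d(5). -/
theorem choose_five_eq (d : ℕ) :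
    (d.choose 5 : ℚ) =
      -(60 / (5 * 4 * 3)) * witt d 2 + (35 / (5 * 4 * 2)) * witt d 3
        - (10 / (5 * 6)) * witt d 4 + (1 / 24) * witt d 5 := by
  obtain ⟨w2, w3, w4, w5⟩ := witt_vals d
  rw [choose_cast, w2, w3, w4, w5]; ring
end

section
/- For every natural number d, C(d,6) = (360/360)·L_d(2) − (224/240)·L_d(3) + (85/180)·L_d(4) − (15/144)·L_d(5) + (1/120)·L_d(6) as rational numbers (the denominators being 6·5·4·3 = 360, 6·5·4·2! = 240, 6·5·3! = 180, 6·4! = 144, 5! = 120), where L_d(w) = (1/w)·Σ_{r ∣ w} μ(r)·d^{w/r} is the Witt number. -/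
open ArithmeticFunction in
private lemma mu6 : ArithmeticFunction.moebius 6 = 1 := by
  have h : (6:ℕ) = 2 * 3 := rfl
  rw [h, isMultiplicative_moebius.map_mul_of_coprime (by norm_num),
    moebius_apply_prime Nat.prime_two, moebius_apply_prime Nat.prime_three]
  norm_num

private lemma mu4 : ArithmeticFunction.moebius 4 = 0 := by
  apply ArithmeticFunction.moebius_eq_zero_of_not_squarefree
  intro h
  exact Nat.prime_two.not_isUnit (h 2 (by norm_num))

private lemma aux_fact : ∀ (k d : ℕ),
    (k.factorial : ℚ) * (d.choose k) = ∏ i ∈ Finset.range k, ((d : ℚ) - i) := by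
  intro k
  induction k with
  | zero => intro d; simp
  | succ k ih =>
    intro d
    cases d with
    | zero =>
      rw [Finset.prod_eq_zero (Finset.mem_range.2 (Nat.succ_pos k)) (by norm_num)]
      simp [Nat.choose_eq_zero_of_lt (Nat.succ_pos k)]
    | succ d =>
      have h := Nat.add_one_mul_choose_eq d k
      have hq : ((d:ℚ)+1) * (d.choose k) = ((d+1).choose (k+1)) * (k+1) := by
        exact_mod_cast congrArg (fun n : ℕ => (n : ℚ)) h
      rw [Finset.prod_range_succ']
      have : ∀ i ∈ Finset.range k, ((d:ℚ)+1 - (i+1)) = ((d:ℚ) - i) := by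
        intro i _; ring
      push_cast
      rw [Finset.prod_congr rfl this, ← ih d]
      have hk : ((k+1).factorial : ℚ) = (k.factorial : ℚ) * (k+1) := by
        push_cast [Nat.factorial_succ]; ring
      push_cast at hk hq ⊢
      nlinarith [hq, hk]

/-- C(d,6) = (360/360)·L_d(2) − (224/240)·L_d(3) + (85/180)·L_d(4) − (15/144)·L_d(5) + (1/120)·L_d(6). -/
theorem choose_six_eq (d : ℕ) :
    (d.choose 6 : ℚ) =
      (360 / 360) * witt d 2 - (224 / 240) * witt d 3 + (85 / 180) * witt d 4
        - (15 / 144) * witt d 5 + (1 / 120) * witt d 6 := by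
  have h6 : (720 : ℚ) * (d.choose 6) =
      (d:ℚ) * ((d:ℚ)-1) * ((d:ℚ)-2) * ((d:ℚ)-3) * ((d:ℚ)-4) * ((d:ℚ)-5) := by
    have h := aux_fact 6 d
    norm_num [Finset.prod_range_succ, Nat.factorial] at h
    linarith [h]
  have hμ1 : ArithmeticFunction.moebius 1 = 1 := ArithmeticFunction.moebius_apply_one
  have hμ2 : ArithmeticFunction.moebius 2 = -1 :=
    ArithmeticFunction.moebius_apply_prime Nat.prime_two
  have hμ3 : ArithmeticFunction.moebius 3 = -1 :=
    ArithmeticFunction.moebius_apply_prime Nat.prime_three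
  have hμ5 : ArithmeticFunction.moebius 5 = -1 :=
    ArithmeticFunction.moebius_apply_prime (by norm_num)
  have hw2 : witt d 2 = ((d:ℚ)^2 - d) / 2 := by
    rw [witt, show (2:ℕ).divisors = {1, 2} from by decide]
    rw [Finset.sum_insert (by decide), Finset.sum_singleton]
    rw [hμ1, hμ2]; norm_num; ring
  have hw3 : witt d 3 = ((d:ℚ)^3 - d) / 3 := by
    rw [witt, show (3:ℕ).divisors = {1, 3} from by decide]
    rw [Finset.sum_insert (by decide), Finset.sum_singleton]
    rw [hμ1, hμ3]; norm_num; ring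
  have hw4 : witt d 4 = ((d:ℚ)^4 - (d:ℚ)^2) / 4 := by
    rw [witt, show (4:ℕ).divisors = {1, 2, 4} from by decide]
    rw [Finset.sum_insert (by decide), Finset.sum_insert (by decide), Finset.sum_singleton]
    rw [hμ1, hμ2, mu4]; norm_num; ring
  have hw5 : witt d 5 = ((d:ℚ)^5 - d) / 5 := by
    rw [witt, show (5:ℕ).divisors = {1, 5} from by decide]
    rw [Finset.sum_insert (by decide), Finset.sum_singleton]
    rw [hμ1, hμ5]; norm_num; ring
  have hw6 : witt d 6 = ((d:ℚ)^6 - (d:ℚ)^3 - (d:ℚ)^2 + d) / 6 := by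
    rw [witt, show (6:ℕ).divisors = {1, 2, 3, 6} from by decide]
    rw [Finset.sum_insert (by decide), Finset.sum_insert (by decide),
      Finset.sum_insert (by decide), Finset.sum_singleton]
    rw [hμ1, hμ2, hμ3, mu6]; norm_num; ring
  rw [hw2, hw3, hw4, hw5, hw6]
  linear_combination h6 / 720
end

section
/- For every natural number d, C(d,7) = −(2520/2520)·L_d(2) + (1603/1680)·L_d(3) − (735/1260)·L_d(4) + (175/1008)·L_d(5) − (21/840)·L_d(6) + (1/720)·L_d(7) as rational numbers (the denominators being 7·6·5·4·3 = 2520, 7·6·5·4·2! = 1680, 7·6·5·3! = 1260, 7·6·4! = 1008, 7·5! = 840, 6! = 720), where L_d(w) = (1/w)·Σ_{r ∣ w} μ(r)·d^{w/r} is the Witt number. -/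
open ArithmeticFunction in
lemma moeb2 : (moebius 2 : ℤ) = -1 := moebius_apply_prime (by norm_num)
open ArithmeticFunction in
lemma moeb3 : (moebius 3 : ℤ) = -1 := moebius_apply_prime (by norm_num)
open ArithmeticFunction in
lemma moeb5 : (moebius 5 : ℤ) = -1 := moebius_apply_prime (by norm_num)
open ArithmeticFunction in
lemma moeb7 : (moebius 7 : ℤ) = -1 := moebius_apply_prime (by norm_num)
open ArithmeticFunction in
lemma moeb4 : (moebius 4 : ℤ) = 0 := by
  apply moebius_eq_zero_of_not_squarefree
  intro h; exact absurd (h 2 (by norm_num)) (by norm_num)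
open ArithmeticFunction in
lemma moeb6 : (moebius 6 : ℤ) = 1 := by
  rw [show (6:ℕ) = 2*3 from rfl, isMultiplicative_moebius.map_mul_of_coprime (by norm_num),
    moeb2, moeb3]; ring

lemma witt2 (d : ℕ) : witt d 2 = ((d:ℚ)^2 - d)/2 := by
  rw [witt, show Nat.divisors 2 = {1,2} from by decide]
  simp [ArithmeticFunction.moebius_apply_one, moeb2]; ring
lemma witt3 (d : ℕ) : witt d 3 = ((d:ℚ)^3 - d)/3 := by
  rw [witt, show Nat.divisors 3 = {1,3} from by decide]
  simp [ArithmeticFunction.moebius_apply_one, moeb3]; ring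
lemma witt4 (d : ℕ) : witt d 4 = ((d:ℚ)^4 - (d:ℚ)^2)/4 := by
  rw [witt, show Nat.divisors 4 = {1,2,4} from by decide]
  simp [ArithmeticFunction.moebius_apply_one, moeb2, moeb4]; ring
lemma witt5 (d : ℕ) : witt d 5 = ((d:ℚ)^5 - d)/5 := by
  rw [witt, show Nat.divisors 5 = {1,5} from by decide]
  simp [ArithmeticFunction.moebius_apply_one, moeb5]; ring
lemma witt6 (d : ℕ) : witt d 6 = ((d:ℚ)^6 - (d:ℚ)^3 - (d:ℚ)^2 + d)/6 := by
  rw [witt, show Nat.divisors 6 = {1,2,3,6} from by decide]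
  simp [ArithmeticFunction.moebius_apply_one, moeb2, moeb3, moeb6]; ring
lemma witt7 (d : ℕ) : witt d 7 = ((d:ℚ)^7 - d)/7 := by
  rw [witt, show Nat.divisors 7 = {1,7} from by decide]
  simp [ArithmeticFunction.moebius_apply_one, moeb7]; ring

lemma choose7 (d : ℕ) : (d.choose 7 : ℚ) =
    (d:ℚ)*((d:ℚ)-1)*((d:ℚ)-2)*((d:ℚ)-3)*((d:ℚ)-4)*((d:ℚ)-5)*((d:ℚ)-6)/5040 := by
  rcases Nat.lt_or_ge d 7 with h | h
  · interval_cases d <;> simp [Nat.choose] 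
  · obtain ⟨n, rfl⟩ := Nat.exists_eq_add_of_le h
    have h1 : (n+1).ascFactorial 7 = 5040 * (n + 7).choose 7 := by
      rw [Nat.ascFactorial_eq_factorial_mul_choose]; norm_num [Nat.factorial]
    have h2 : (n+1).ascFactorial 7 = (n+1)*(n+2)*(n+3)*(n+4)*(n+5)*(n+6)*(n+7) := by
      simp [Nat.ascFactorial]; ring
    have h3 : (5040 : ℚ) * ((7 + n).choose 7) = ((n:ℚ)+1)*((n:ℚ)+2)*((n:ℚ)+3)*((n:ℚ)+4)*((n:ℚ)+5)*((n:ℚ)+6)*((n:ℚ)+7) := by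
      rw [show 7 + n = n + 7 from by ring]
      exact_mod_cast congrArg (Nat.cast : ℕ → ℚ) (h1.symm.trans h2)
    rw [eq_div_iff (by norm_num)]
    push_cast
    linear_combination h3

/-- C(d,7) = −(2520/2520)·L_d(2) + (1603/1680)·L_d(3) − (735/1260)·L_d(4) + (175/1008)·L_d(5)
− (21/840)·L_d(6) + (1/720)·L_d(7). -/
theorem choose_seven_eq (d : ℕ) :
    (d.choose 7 : ℚ) =
      -(2520 / 2520) * witt d 2 + (1603 / 1680) * witt d 3 - (735 / 1260) * witt d 4
        + (175 / 1008) * witt d 5 - (21 / 840) * witt d 6 + (1 / 720) * witt d 7 := by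
  rw [choose7, witt2, witt3, witt4, witt5, witt6, witt7]; ring
end
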